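/- For all real numbers R > 0 and c ≥ e (Euler's number), ∫₀^{2R} √(log(2Rc/ε)) dε ≤ 2R√(log c) + R. -/

import Mathlib

open MeasureTheory

lemma log_intervalIntegrable {a : ℝ} (ha : 0 < a) :
    IntervalIntegrable Real.log volume 0 a := by
  have hg : IntervalIntegrable (fun x : ℝ => 2 * x ^ (-(1:ℝ)/2) + |Real.log a|)
      volume 0 a := by
    exact ((intervalIntegral.intervalIntegrable_rpow' (by norm_num)).const_mul 2).add
      intervalIntegrable_const
  refine hg.mono_fun' (Real.measurable_log.aestronglyMeasurable) ?_
  rw [Set.uIoc_of_le ha.le]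
  filter_upwards [ae_restrict_mem measurableSet_Ioc] with x hx
  obtain ⟨hx0, hxa⟩ := hx
  rcases le_or_gt x 1 with hx1 | hx1
  · have hlx : Real.log x ≤ 0 := Real.log_nonpos hx0.le hx1
    have h1 : ‖Real.log x‖ = Real.log x⁻¹ := by
      rw [Real.log_inv, Real.norm_eq_abs, abs_of_nonpos hlx]
    have hxi : (0:ℝ) < x⁻¹ := by positivity
    have h2 : Real.log x⁻¹ ≤ 2 * Real.sqrt x⁻¹ := by
      have := Real.log_sqrt hxi.le
      have h3 : Real.log (Real.sqrt x⁻¹) ≤ Real.sqrt x⁻¹ - 1 :=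
        Real.log_le_sub_one_of_pos (Real.sqrt_pos.mpr hxi)
      nlinarith [Real.sqrt_nonneg x⁻¹]
    have h4 : Real.sqrt x⁻¹ = x ^ (-(1:ℝ)/2) := by
      rw [Real.sqrt_eq_rpow,
        show x⁻¹ = x ^ (-(1:ℝ)) by rw [Real.rpow_neg hx0.le, Real.rpow_one],
        ← Real.rpow_mul hx0.le]
      norm_num
    rw [h1]
    calc Real.log x⁻¹ ≤ 2 * Real.sqrt x⁻¹ := h2
      _ = 2 * x ^ (-(1:ℝ)/2) := by rw [h4]
      _ ≤ 2 * x ^ (-(1:ℝ)/2) + |Real.log a| := le_add_of_nonneg_right (abs_nonneg _)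
  · have hlx : 0 ≤ Real.log x := Real.log_nonneg hx1.le
    have h1 : ‖Real.log x‖ = Real.log x := by
      rw [Real.norm_eq_abs, abs_of_nonneg hlx]
    have h2 : Real.log x ≤ Real.log a := Real.log_le_log hx0 hxa
    have h3 : Real.log a ≤ |Real.log a| := le_abs_self _
    have h4 : (0:ℝ) ≤ 2 * x ^ (-(1:ℝ)/2) := by positivity
    rw [h1]; linarith

lemma integral_log_from_zero_aux {a : ℝ} (ha : 0 < a) :
    (∫ x in (0:ℝ)..a, Real.log x) = a * Real.log a - a := by
  have hF : ∀ x ∈ Set.Ioo (0:ℝ) a,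
      HasDerivAt (fun y : ℝ => y * Real.log y - y) (Real.log x) x := by
    intro x hx
    have h := (Real.hasDerivAt_mul_log (ne_of_gt hx.1)).sub (hasDerivAt_id' x)
    simpa [Pi.sub_def] using h
  have hcont : ContinuousOn (fun y : ℝ => y * Real.log y - y) (Set.Icc 0 a) :=
    (Real.continuous_mul_log.sub continuous_id).continuousOn
  have := intervalIntegral.integral_eq_sub_of_hasDerivAt_of_le ha.le hcont hF
    (log_intervalIntegrable ha)
  simpa using this

/-- For `R > 0` and `c ≥ e`,
`∫₀^{2R} √(log(2Rc/ε)) dε ≤ 2R√(log c) + R`. -/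
theorem dudley_integral_upper_bound
    (R c : ℝ) (hR : 0 < R) (hc : Real.exp 1 ≤ c) :
    (∫ ε in (0 : ℝ)..(2 * R), Real.sqrt (Real.log (2 * R * c / ε)))
      ≤ 2 * R * Real.sqrt (Real.log c) + R := by
  have hR2 : (0:ℝ) < 2 * R := by linarith
  have hc0 : (0:ℝ) < c := lt_of_lt_of_le (Real.exp_pos 1) hc
  have hlc : (1:ℝ) ≤ Real.log c := by
    rw [← Real.log_exp 1]
    exact Real.log_le_log (Real.exp_pos 1) hc
  have hlc0 : (0:ℝ) ≤ Real.log c := by linarith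
  set f : ℝ → ℝ := fun ε => Real.sqrt (Real.log (2 * R * c / ε)) with hf_def
  set g : ℝ → ℝ := fun ε =>
    Real.sqrt (Real.log c) + (1/2) * (Real.log (2 * R) - Real.log ε) with hg_def
  -- g is interval integrable
  have hgint : IntervalIntegrable g volume 0 (2 * R) :=
    intervalIntegrable_const.add
      ((intervalIntegrable_const.sub (log_intervalIntegrable hR2)).const_mul (1/2))
  -- integral of g
  have hgval : (∫ ε in (0:ℝ)..(2*R), g ε) = 2 * R * Real.sqrt (Real.log c) + R := by
    rw [hg_def]
    rw [intervalIntegral.integral_add intervalIntegrable_const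
      ((intervalIntegrable_const.sub (log_intervalIntegrable hR2)).const_mul (1/2)),
      intervalIntegral.integral_const_mul,
      intervalIntegral.integral_sub intervalIntegrable_const (log_intervalIntegrable hR2),
      intervalIntegral.integral_const, intervalIntegral.integral_const,
      integral_log_from_zero_aux hR2]
    simp only [smul_eq_mul]
    ring
  -- pointwise bound on Ioc
  have hpt : ∀ x ∈ Set.Ioc (0:ℝ) (2*R), f x ≤ g x := by
    intro x hx
    obtain ⟨hx0, hx2R⟩ := hx
    have hlog : Real.log (2 * R * c / x)
        = Real.log c + (Real.log (2 * R) - Real.log x) := by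
      rw [Real.log_div (by positivity) (ne_of_gt hx0),
        Real.log_mul (by positivity) (ne_of_gt hc0)]
      ring
    set s : ℝ := Real.log (2 * R) - Real.log x with hs_def
    have hs0 : 0 ≤ s := by
      have := Real.log_le_log hx0 hx2R
      simp only [hs_def]; linarith
    have hsq : Real.sqrt (Real.log c) ^ 2 = Real.log c := Real.sq_sqrt hlc0
    have hsqrt1 : (1:ℝ) ≤ Real.sqrt (Real.log c) := by
      rw [show (1:ℝ) = Real.sqrt 1 by simp]
      exact Real.sqrt_le_sqrt hlc
    have key : Real.log c + s ≤ (Real.sqrt (Real.log c) + s/2)^2 := by nlinarith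
    have h1 : f x ≤ Real.sqrt ((Real.sqrt (Real.log c) + s/2)^2) := by
      rw [hf_def]; simp only
      rw [hlog]
      exact Real.sqrt_le_sqrt key
    rw [Real.sqrt_sq (by positivity)] at h1
    simp only [hg_def]
    linarith
  by_cases hfint : IntervalIntegrable f volume 0 (2 * R)
  · have hmono : (∫ ε in (0:ℝ)..(2*R), f ε) ≤ ∫ ε in (0:ℝ)..(2*R), g ε := by
      refine intervalIntegral.integral_mono_ae_restrict hR2.le hfint hgint ?_
      have h0 : ∀ᵐ x ∂(volume.restrict (Set.Icc (0:ℝ) (2*R))), x ≠ 0 := by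
        refine ae_restrict_of_ae ?_
        rw [ae_iff]
        have : {x : ℝ | ¬ x ≠ 0} = {0} := by ext x; simp
        rw [this]
        exact Real.volume_singleton
      filter_upwards [h0, ae_restrict_mem measurableSet_Icc] with x hx0 hxmem
      exact hpt x ⟨lt_of_le_of_ne hxmem.1 (Ne.symm hx0), hxmem.2⟩
    calc (∫ ε in (0:ℝ)..(2*R), f ε) ≤ ∫ ε in (0:ℝ)..(2*R), g ε := hmono
      _ = 2 * R * Real.sqrt (Real.log c) + R := hgval
  · rw [intervalIntegral.integral_undef hfint]
    positivity
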